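/- Let f : ℕ → ℝ be such that (1/N) ∑_{n=1}^{N} |Δf(n)| → 0 as N → ∞. Then the sequence of exponential sums { ∑_{n=1}^{N} e(f(n)) : N ≥ 1 } is unbounded. -/

import Mathlib

open Filter

/-- `e(x) = e^{2πix}`. -/
noncomputable def e (x : ℝ) : ℂ := Complex.exp (2 * Real.pi * Complex.I * x)

lemma e_abs (x : ℝ) : ‖e x‖ = 1 := by
  rw [e, Complex.norm_exp]
  have : (2 * Real.pi * Complex.I * x).re = 0 := by simp
  rw [this, Real.exp_zero]

lemma e_sub_one_le (t : ℝ) : ‖e t - 1‖ ≤ 4 * Real.pi * |t| := by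
  have hpi : (0:ℝ) < Real.pi := Real.pi_pos
  have habs : ‖2 * Real.pi * Complex.I * t‖ = 2 * Real.pi * |t| := by
    simp [abs_of_pos hpi, Complex.norm_real, mul_comm]
  by_cases hc : ‖2 * Real.pi * Complex.I * t‖ ≤ 1
  · calc ‖e t - 1‖ ≤ 2 * ‖2 * Real.pi * Complex.I * t‖ :=
        Complex.norm_exp_sub_one_le hc
    _ = 4 * Real.pi * |t| := by rw [habs]; ring
  · push_neg at hc
    rw [habs] at hc
    have h2 : ‖e t - 1‖ ≤ 2 := by
      calc ‖e t - 1‖ ≤ ‖e t‖ + ‖(1:ℂ)‖ :=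
            norm_sub_le _ _
      _ = 2 := by rw [e_abs]; simp; norm_num
    nlinarith
lemma e_sub_le (x y : ℝ) : ‖e x - e y‖ ≤ 4 * Real.pi * |x - y| := by
  have : e x - e y = e y * (e (x - y) - 1) := by
    rw [mul_sub, mul_one, e, e, e, ← Complex.exp_add]
    congr 1
    push_cast
    ring
  rw [this, norm_mul, e_abs, one_mul]
  exact e_sub_one_le _

/-- if `(1/N) ∑_{n=1}^{N} |Δf(n)| → 0`, then the exponential sums
`∑_{n=1}^{N} e(f(n))` are unbounded. -/
theorem stmt_5 (f : ℕ → ℝ)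
    (h : Tendsto
      (fun N : ℕ => (1 / (N : ℝ)) * ∑ n ∈ Finset.Icc 1 N, |f (n + 1) - f n|)
      atTop (nhds 0)) :
    ¬ ∃ M : ℝ, ∀ N : ℕ, 1 ≤ N →
      ‖∑ n ∈ Finset.Icc 1 N, e (f n)‖ ≤ M := by
  rintro ⟨M, hM⟩
  have hpi : (0:ℝ) < Real.pi := Real.pi_pos
  have hM1 : 1 ≤ M := by
    have := hM 1 le_rfl
    simpa [e_abs] using this
  set C : ℝ := 1 + M with hC
  have hC2 : (2:ℝ) ≤ C := by linarith
  have hC0 : (0:ℝ) < C := by linarith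
  -- bound on partial sums of e ∘ f starting from 0
  have hG : ∀ i : ℕ, ‖∑ j ∈ Finset.range (i+1), e (f j)‖ ≤ C := by
    intro i
    have hsplit : ∑ j ∈ Finset.range (i+1), e (f j)
        = e (f 0) + ∑ j ∈ Finset.Icc 1 i, e (f j) := by
      rw [Finset.range_eq_Ico, Finset.sum_eq_sum_Ico_succ_bot (Nat.succ_pos i),
        Nat.succ_eq_add_one, Finset.Ico_add_one_right_eq_Icc]
    rw [hsplit]
    have h2 : ‖∑ j ∈ Finset.Icc 1 i, e (f j)‖ ≤ M := by
      rcases Nat.eq_zero_or_pos i with hi | hi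
      · simp [hi]; linarith
      · exact hM i hi
    calc ‖e (f 0) + ∑ j ∈ Finset.Icc 1 i, e (f j)‖
        ≤ ‖e (f 0)‖ + ‖∑ j ∈ Finset.Icc 1 i, e (f j)‖ :=
          norm_add_le _ _
      _ ≤ 1 + M := by rw [e_abs]; linarith
  -- choose ε
  set ε : ℝ := 1 / (8 * Real.pi * C) with hε
  have hε0 : 0 < ε := by positivity
  have hev : ∀ᶠ N : ℕ in atTop,
      (1 / (N : ℝ)) * ∑ n ∈ Finset.Icc 1 N, |f (n + 1) - f n| < ε :=
    h.eventually_lt_const hε0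
  obtain ⟨N, hNε, hNbig⟩ := (hev.and (eventually_gt_atTop (⌈4 * C⌉₊ + 1))).exists
  have hN1 : 1 ≤ N := by omega
  have hNpos : (0:ℝ) < N := by exact_mod_cast Nat.pos_of_ne_zero (by omega)
  have hN4C : 4 * C < (N : ℝ) := by
    have : (⌈4 * C⌉₊ : ℝ) < N := by exact_mod_cast hNbig.trans_le' (Nat.le_succ _)
    exact lt_of_le_of_lt (Nat.le_ceil _) this
  -- sum of |Δf| over Icc 1 N is < ε N
  have hsum : ∑ n ∈ Finset.Icc 1 N, |f (n + 1) - f n| < ε * N := by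
    have := hNε
    rw [div_mul_eq_mul_div, one_mul, div_lt_iff₀ hNpos] at this
    linarith
  -- Abel summation
  set a : ℕ → ℂ := fun n => (starRingEnd ℂ) (e (f n)) with ha
  set b : ℕ → ℂ := fun n => e (f n) with hb
  have hab : ∀ n, a n * b n = 1 := by
    intro n
    simp only [ha, hb, e, ← Complex.exp_conj, ← Complex.exp_add]
    have : (starRingEnd ℂ) (2 * Real.pi * Complex.I * (f n))
        + 2 * Real.pi * Complex.I * (f n) = 0 := by
      simp [map_mul, Complex.conj_I, Complex.conj_ofReal, map_ofNat]
    rw [this, Complex.exp_zero]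
  have key : ∑ n ∈ Finset.Ioc 0 N, a n • b n = (N : ℂ) := by
    simp only [smul_eq_mul, hab, Finset.sum_const, Nat.card_Ioc, Nat.sub_zero, nsmul_eq_mul,
      mul_one]
  rw [Finset.sum_Ioc_by_parts a b (Nat.pos_of_ne_zero (by omega))] at key
  -- take absolute values
  have habs_a : ∀ n, ‖a n‖ = 1 := by
    intro n; simp [ha, e_abs]
  have hterm : ∀ i ∈ Finset.Ioc 0 (N - 1),
      ‖(a (i+1) - a i) • (∑ j ∈ Finset.range (i+1), b j)‖
        ≤ (4 * Real.pi * |f (i + 1) - f i|) * C := by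
    intro i _
    rw [smul_eq_mul, norm_mul]
    have h1 : ‖a (i+1) - a i‖ ≤ 4 * Real.pi * |f (i + 1) - f i| := by
      have : a (i+1) - a i = (starRingEnd ℂ) (e (f (i+1)) - e (f i)) := by
        simp [ha, map_sub]
      rw [this, Complex.norm_conj]
      exact e_sub_le _ _
    have h2 : ‖∑ j ∈ Finset.range (i+1), b j‖ ≤ C := hG i
    have h0 : (0:ℝ) ≤ ‖∑ j ∈ Finset.range (i+1), b j‖ := norm_nonneg _
    nlinarith [norm_nonneg (a (i+1) - a i)]
  have hbig : (N : ℝ) ≤ C + C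
      + ∑ i ∈ Finset.Ioc 0 (N - 1), (4 * Real.pi * |f (i + 1) - f i|) * C := by
    have h0 : (N : ℝ) = ‖(N : ℂ)‖ := by simp
    rw [h0, ← key]
    calc ‖a N • (∑ j ∈ Finset.range (N+1), b j)
            - a (0+1) • (∑ j ∈ Finset.range (0+1), b j)
            - ∑ i ∈ Finset.Ioc 0 (N-1), (a (i+1) - a i) • (∑ j ∈ Finset.range (i+1), b j)‖
        ≤ ‖a N • (∑ j ∈ Finset.range (N+1), b j)‖
            + ‖a (0+1) • (∑ j ∈ Finset.range (0+1), b j)‖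
            + ‖∑ i ∈ Finset.Ioc 0 (N-1),
                (a (i+1) - a i) • (∑ j ∈ Finset.range (i+1), b j)‖ := by
          refine le_trans (norm_sub_le _ _) ?_
          gcongr
          exact norm_sub_le _ _
      _ ≤ C + C + ∑ i ∈ Finset.Ioc 0 (N - 1), (4 * Real.pi * |f (i + 1) - f i|) * C := by
          gcongr
          · rw [smul_eq_mul, norm_mul, habs_a, one_mul]; exact hG N
          · rw [smul_eq_mul, norm_mul, habs_a, one_mul]; exact hG 0
          · exact le_trans (norm_sum_le _ _) (Finset.sum_le_sum hterm)
  -- bound the sum term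
  have hsub : ∑ i ∈ Finset.Ioc 0 (N-1), |f (i + 1) - f i|
      ≤ ∑ n ∈ Finset.Icc 1 N, |f (n + 1) - f n| := by
    apply Finset.sum_le_sum_of_subset_of_nonneg
    · intro x hx
      simp only [Finset.mem_Ioc, Finset.mem_Icc] at hx ⊢
      omega
    · intro i _ _; exact abs_nonneg _
  have hS : ∑ i ∈ Finset.Ioc 0 (N-1), (4 * Real.pi * |f (i + 1) - f i|) * C
      < 4 * Real.pi * C * (ε * N) := by
    have : ∑ i ∈ Finset.Ioc 0 (N-1), (4 * Real.pi * |f (i + 1) - f i|) * C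
        = 4 * Real.pi * C * ∑ i ∈ Finset.Ioc 0 (N-1), |f (i + 1) - f i| := by
      rw [Finset.mul_sum]; congr 1; ext i; ring
    rw [this]
    have h4 : (0:ℝ) < 4 * Real.pi * C := by positivity
    exact (mul_lt_mul_iff_right₀ h4).2 (lt_of_le_of_lt hsub hsum)
  have hεval : 4 * Real.pi * C * (ε * N) = N / 2 := by
    rw [hε]
    field_simp
    ring
  rw [hεval] at hS
  linarith
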